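/- arXiv:2206.00620 — 5 statements merged into one kernel-verified Lean document; each statement's English description precedes it below -/
import Mathlib

section
/- Let θ > 0 be a real constant and let g : [0,∞) → [0,∞) be a measurable nonnegative function with g(0) = 0 and g(0+) = 0 (i.e. g tends to 0 as x tends to 0 from the right). Define I[θ,g](t) = ∫₀^∞ x^{θ−1} exp(−t·x − g(x)) dx for t > 0. Then lim_{t→∞} t^θ · I[θ,g](t) = Γ(θ), where Γ denotes the Gamma function. -/
open MeasureTheory Real Filter Set

/-- Lemma 4.1: for `θ > 0` and a nonnegative measurable `g` on `[0,∞)` with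
`g(0) = 0` and `g(0+) = 0`, the auxiliary integral
`I[θ,g](t) = ∫₀^∞ x^{θ-1} exp(-t x - g x) dx` satisfies
`lim_{t→∞} t^θ I[θ,g](t) = Γ(θ)`. -/
theorem tail_auxiliary_integral_limit
    (θ : ℝ) (hθ : 0 < θ) (g : ℝ → ℝ) (hg_meas : Measurable g)
    (hg_nonneg : ∀ x, 0 ≤ x → 0 ≤ g x) (hg0 : g 0 = 0)
    (hg_lim : Tendsto g (nhdsWithin 0 (Ioi 0)) (nhds 0)) :
    Tendsto
      (fun t : ℝ => t ^ θ * ∫ x in Ioi (0 : ℝ), x ^ (θ - 1) * Real.exp (-(t * x) - g x))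
      atTop (nhds (Real.Gamma θ)) := by
  have key : ∀ᶠ t : ℝ in atTop,
      (∫ y in Ioi (0:ℝ), y ^ (θ - 1) * Real.exp (-y - g (y / t)))
        = t ^ θ * ∫ x in Ioi (0:ℝ), x ^ (θ - 1) * Real.exp (-(t * x) - g x) := by
    filter_upwards [eventually_gt_atTop (0:ℝ)] with t ht
    have h1 := integral_comp_mul_left_Ioi
      (fun y => y ^ (θ - 1) * Real.exp (-y - g (y / t))) 0 ht
    rw [mul_zero] at h1
    have h2 : (∫ x in Ioi (0:ℝ), (t * x) ^ (θ - 1) * Real.exp (-(t * x) - g (t * x / t)))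
        = ∫ x in Ioi (0:ℝ), t ^ (θ - 1) * (x ^ (θ - 1) * Real.exp (-(t * x) - g x)) := by
      refine setIntegral_congr_fun measurableSet_Ioi (fun x hx => ?_)
      have hdiv : t * x / t = x := by field_simp
      rw [hdiv, Real.mul_rpow ht.le (le_of_lt hx)]
      ring
    rw [h2, MeasureTheory.integral_const_mul] at h1
    have hpow : t ^ θ = t * t ^ (θ - 1) := by
      have h := Real.rpow_add ht 1 (θ - 1)
      rw [Real.rpow_one] at h
      rw [show (1:ℝ) + (θ - 1) = θ by ring] at h
      exact h
    simp only [smul_eq_mul] at h1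
    rw [hpow, mul_assoc, h1, ← mul_assoc, mul_inv_cancel₀ ht.ne', one_mul]
  refine Tendsto.congr' key ?_
  have hG : Real.Gamma θ = ∫ y in Ioi (0:ℝ), y ^ (θ - 1) * Real.exp (-y) := by
    rw [Real.Gamma_eq_integral hθ]
    exact setIntegral_congr_fun measurableSet_Ioi (fun x _ => mul_comm _ _)
  rw [hG]
  have hbi : IntegrableOn (fun y : ℝ => y ^ (θ - 1) * Real.exp (-y)) (Ioi 0) :=
    (Real.GammaIntegral_convergent hθ).congr (ae_of_all _ fun x => mul_comm _ _)
  refine tendsto_integral_filter_of_dominated_convergence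
    (fun y => y ^ (θ - 1) * Real.exp (-y)) ?_ ?_ hbi ?_
  · filter_upwards with t
    have hm : Measurable fun y : ℝ => y ^ (θ - 1) * Real.exp (-y - g (y / t)) := by
      fun_prop
    exact hm.aestronglyMeasurable
  · filter_upwards [eventually_gt_atTop (0:ℝ)] with t ht
    filter_upwards [ae_restrict_mem measurableSet_Ioi] with y hy
    have hy0 : (0:ℝ) < y := hy
    have hgy : 0 ≤ g (y / t) := hg_nonneg _ (div_nonneg hy0.le ht.le)
    have h1 : Real.exp (-y - g (y / t)) ≤ Real.exp (-y) := by
      apply Real.exp_le_exp.2; linarith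
    rw [Real.norm_eq_abs, abs_mul, abs_of_nonneg (Real.rpow_nonneg hy0.le _),
      abs_of_nonneg (Real.exp_pos _).le]
    exact mul_le_mul_of_nonneg_left h1 (Real.rpow_nonneg hy0.le _)
  · filter_upwards [ae_restrict_mem measurableSet_Ioi] with y hy
    have hy0 : (0:ℝ) < y := hy
    have h1 : Tendsto (fun t : ℝ => y / t) atTop (nhdsWithin 0 (Ioi 0)) := by
      rw [tendsto_nhdsWithin_iff]
      constructor
      · exact tendsto_const_nhds.div_atTop tendsto_id
      · filter_upwards [eventually_gt_atTop (0:ℝ)] with t ht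
        exact div_pos hy0 ht
    have h2 : Tendsto (fun t : ℝ => g (y / t)) atTop (nhds 0) := hg_lim.comp h1
    have h3 : Tendsto (fun t : ℝ => Real.exp (-y - g (y / t))) atTop
        (nhds (Real.exp (-y))) := by
      have := (Real.continuous_exp.tendsto (-y - 0)).comp
        ((tendsto_const_nhds : Tendsto (fun _ : ℝ => -y) atTop (nhds (-y))).sub h2)
      simpa [Function.comp_def] using this
    simpa using tendsto_const_nhds.mul h3
end

section
/- Let θ > 0 be a real constant and let g : [0,∞) → [0,∞) be a measurable nonnegative function with g(0) = 0 and g(0+) = 0. Define I[θ,g](t) = ∫₀^∞ x^{θ−1} exp(−t·x − g(x)) dx. Then liminf_{t→∞} t^θ · I[θ,g](t) ≥ Γ(θ); this follows from the lower estimate by choosing the truncation level Δ = Δ(t) = t^{−1/2}. -/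
open MeasureTheory Real Filter Set

/-- Lower-bound half of Lemma 4.1: for `θ > 0` and `g` nonnegative measurable on `[0,∞)`
with `g(0) = 0` and `g(0+) = 0`, one has `liminf_{t→∞} t^θ I[θ,g](t) ≥ Γ(θ)`. -/
theorem tail_auxiliary_integral_liminf
    (θ : ℝ) (hθ : 0 < θ) (g : ℝ → ℝ) (hg_meas : Measurable g)
    (hg_nonneg : ∀ x, 0 ≤ x → 0 ≤ g x) (hg0 : g 0 = 0)
    (hg_lim : Tendsto g (nhdsWithin 0 (Ioi 0)) (nhds 0)) :
    Real.Gamma θ ≤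
      Filter.liminf
        (fun t : ℝ => t ^ θ * ∫ x in Ioi (0 : ℝ), x ^ (θ - 1) * Real.exp (-(t * x) - g x))
        atTop := by
  have hΓ : Real.Gamma θ = ∫ x in Ioi (0:ℝ), x ^ (θ - 1) * Real.exp (-x) := by
    rw [Real.Gamma_eq_integral hθ]
    refine setIntegral_congr_fun measurableSet_Ioi (fun x hx => ?_)
    ring
  set G : ℝ → ℝ → ℝ := fun t u => u ^ (θ - 1) * Real.exp (-u - g (t⁻¹ * u)) with hGdef
  -- step 1: dominated convergence
  have key : Tendsto (fun t => ∫ u in Ioi (0:ℝ), G t u) atTop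
      (nhds (Real.Gamma θ)) := by
    rw [hΓ]
    have hbd_int : Integrable (fun u : ℝ => u ^ (θ - 1) * Real.exp (-u))
        (Measure.restrict volume (Ioi 0)) := by
      have := Real.GammaIntegral_convergent hθ
      refine this.congr_fun (fun x hx => ?_) measurableSet_Ioi |>.mono_set le_rfl
      ring
    refine tendsto_integral_filter_of_dominated_convergence
      (fun u => u ^ (θ - 1) * Real.exp (-u)) ?_ ?_ hbd_int ?_
    · filter_upwards with t
      refine Measurable.aestronglyMeasurable ?_
      have : Measurable (fun u : ℝ => g (t⁻¹ * u)) := hg_meas.comp (by fun_prop)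
      fun_prop
    · filter_upwards [eventually_gt_atTop (0:ℝ)] with t ht
      refine (ae_restrict_iff' measurableSet_Ioi).mpr ?_
      filter_upwards with u hu
      have hu' : (0:ℝ) < u := hu
      have hgnn : 0 ≤ g (t⁻¹ * u) := hg_nonneg _ (by positivity)
      have h1 : 0 ≤ u ^ (θ - 1) := Real.rpow_nonneg hu'.le _
      rw [Real.norm_eq_abs, abs_of_nonneg (by positivity)]
      have : Real.exp (-u - g (t⁻¹ * u)) ≤ Real.exp (-u) := by
        apply Real.exp_le_exp.mpr; linarith
      exact mul_le_mul_of_nonneg_left this h1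
    · refine (ae_restrict_iff' measurableSet_Ioi).mpr ?_
      filter_upwards with u hu
      have hu' : (0:ℝ) < u := hu
      have h1 : Tendsto (fun t : ℝ => t⁻¹ * u) atTop (nhdsWithin 0 (Ioi 0)) := by
        rw [tendsto_nhdsWithin_iff]
        constructor
        · have : Tendsto (fun t : ℝ => t⁻¹ * u) atTop (nhds (0 * u)) :=
            (tendsto_inv_atTop_zero).mul_const u
          simpa using this
        · filter_upwards [eventually_gt_atTop (0:ℝ)] with t ht
          exact mul_pos (inv_pos.mpr ht) hu'
      have h2 : Tendsto (fun t : ℝ => g (t⁻¹ * u)) atTop (nhds 0) :=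
        hg_lim.comp h1
      have h3 : Tendsto (fun t : ℝ => u ^ (θ - 1) * Real.exp (-u - g (t⁻¹ * u)))
          atTop (nhds (u ^ (θ - 1) * Real.exp (-u - 0))) := by
        exact tendsto_const_nhds.mul ((tendsto_const_nhds.sub h2).rexp)
      simpa using h3
  -- step 2: change of variables identity for t > 0
  have heq : ∀ᶠ t : ℝ in atTop,
      (∫ u in Ioi (0:ℝ), G t u)
        = t ^ θ * ∫ x in Ioi (0:ℝ), x ^ (θ - 1) * Real.exp (-(t * x) - g x) := by
    filter_upwards [eventually_gt_atTop (0:ℝ)] with t ht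
    set f : ℝ → ℝ := fun x => x ^ (θ - 1) * Real.exp (-(t * x) - g x) with hf
    have hsub : (∫ u in Ioi (0:ℝ), f (t⁻¹ * u)) = t * ∫ x in Ioi (0:ℝ), f x := by
      have := integral_comp_mul_left_Ioi f 0 (inv_pos.mpr ht)
      simpa [smul_eq_mul] using this
    have hGf : ∀ u ∈ Ioi (0:ℝ), G t u = t ^ (θ - 1) * f (t⁻¹ * u) := by
      intro u hu
      have hu' : (0:ℝ) < u := hu
      simp only [hGdef, hf]
      have hmul : ((t:ℝ)⁻¹ * u) ^ (θ - 1) = (t⁻¹) ^ (θ - 1) * u ^ (θ - 1) :=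
        Real.mul_rpow (by positivity) hu'.le
      have hinv : ((t:ℝ)⁻¹) ^ (θ - 1) = (t ^ (θ - 1))⁻¹ := Real.inv_rpow ht.le _
      have htx : t * (t⁻¹ * u) = u := by field_simp
      rw [hmul, hinv, htx]
      have hne : (t:ℝ) ^ (θ - 1) ≠ 0 := (Real.rpow_pos_of_pos ht _).ne'
      field_simp
    calc (∫ u in Ioi (0:ℝ), G t u)
        = ∫ u in Ioi (0:ℝ), t ^ (θ - 1) * f (t⁻¹ * u) :=
          setIntegral_congr_fun measurableSet_Ioi hGf
      _ = t ^ (θ - 1) * ∫ u in Ioi (0:ℝ), f (t⁻¹ * u) := integral_const_mul _ _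
      _ = t ^ (θ - 1) * (t * ∫ x in Ioi (0:ℝ), f x) := by rw [hsub]
      _ = t ^ θ * ∫ x in Ioi (0:ℝ), f x := by
          rw [← mul_assoc]
          congr 1
          rw [← Real.rpow_add_one ht.ne' (θ - 1)]
          norm_num
  have key' : Tendsto
      (fun t : ℝ => t ^ θ * ∫ x in Ioi (0:ℝ), x ^ (θ - 1) * Real.exp (-(t * x) - g x))
      atTop (nhds (Real.Gamma θ)) := key.congr' heq
  exact key'.liminf_eq.ge
end

section
/- Let α, β, κ, c₁, c₃ be positive real constants and let γ > −1. Then lim_{t→∞} t^{α(γ+1)/β} · ∫₀^∞ Q^γ · exp(−c₁ · t^α · Q^β − c₃ · Q^κ) dQ = β^{−1} · c₁^{−(γ+1)/β} · Γ((γ+1)/β), where Γ denotes the Gamma function. -/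
open MeasureTheory Real Filter Set

lemma aux_integrable {β c₁ γ : ℝ} (hβ : 0 < β) (hc₁ : 0 < c₁) (hγ : -1 < γ) :
    IntegrableOn (fun u : ℝ => u ^ γ * Real.exp (-(c₁ * u ^ β))) (Ioi 0) := by
  set a := (γ + 1) / β with ha_def
  have ha : 0 < a := div_pos (by linarith) hβ
  have h0 : IntegrableOn (fun x : ℝ => Real.exp (-x) * x ^ (a - 1)) (Ioi 0) :=
    Real.GammaIntegral_convergent ha
  have h1 : IntegrableOn (fun x : ℝ => Real.exp (-(c₁ * x)) * (c₁ * x) ^ (a - 1)) (Ioi 0) := by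
    have := (integrableOn_Ioi_comp_mul_left_iff
      (fun x : ℝ => Real.exp (-x) * x ^ (a - 1)) 0 hc₁).mpr
    simpa using this (by simpa using h0)
  have h2 : IntegrableOn (fun x : ℝ => x ^ (a - 1) * Real.exp (-(c₁ * x))) (Ioi 0) := by
    refine IntegrableOn.congr_fun (h1.const_mul (c₁ ^ (1 - a))) (fun x hx => ?_) measurableSet_Ioi
    have hx0 : (0:ℝ) < x := hx
    rw [mul_rpow hc₁.le hx0.le]
    rw [show c₁ ^ (1 - a) * (Real.exp (-(c₁ * x)) * (c₁ ^ (a - 1) * x ^ (a - 1)))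
        = (c₁ ^ (1 - a) * c₁ ^ (a - 1)) * (x ^ (a - 1) * Real.exp (-(c₁ * x))) by ring,
      ← Real.rpow_add hc₁]
    norm_num
  have key := (integrableOn_Ioi_comp_rpow_iff'
    (fun u : ℝ => u ^ γ * Real.exp (-(c₁ * u ^ β))) (p := β⁻¹) (by positivity)).mp
  refine key ?_
  refine IntegrableOn.congr_fun h2 (fun x hx => ?_) measurableSet_Ioi
  have hx0 : (0:ℝ) < x := hx
  have hxb : (x ^ β⁻¹) ^ β = x := by
    rw [← Real.rpow_mul hx0.le, inv_mul_cancel₀ hβ.ne', Real.rpow_one]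
  rw [smul_eq_mul, hxb, ← Real.rpow_mul hx0.le,
    show x ^ (β⁻¹ - 1) * (x ^ (β⁻¹ * γ) * Real.exp (-(c₁ * x)))
      = x ^ (β⁻¹ - 1) * x ^ (β⁻¹ * γ) * Real.exp (-(c₁ * x)) by ring,
    ← Real.rpow_add hx0]
  congr 1
  congr 1
  field_simp [ha_def]
  rw [ha_def, sub_mul, div_mul_cancel₀ _ hβ.ne']; ring

/-- Asymptotics in Example 4.1:
`lim_{t→∞} t^{α(γ+1)/β} ∫₀^∞ Q^γ exp(-c₁ t^α Q^β - c₃ Q^κ) dQ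
  = β⁻¹ c₁^{-(γ+1)/β} Γ((γ+1)/β)`. -/
theorem example41_mixture_integral_limit
    (α β κ c₁ c₃ γ : ℝ) (hα : 0 < α) (hβ : 0 < β) (hκ : 0 < κ)
    (hc₁ : 0 < c₁) (hc₃ : 0 < c₃) (hγ : -1 < γ) :
    Tendsto
      (fun t : ℝ => t ^ (α * (γ + 1) / β) *
        ∫ Q in Ioi (0 : ℝ), Q ^ γ * Real.exp (-(c₁ * t ^ α * Q ^ β) - c₃ * Q ^ κ))
      atTop
      (nhds (β⁻¹ * c₁ ^ (-((γ + 1) / β)) * Real.Gamma ((γ + 1) / β))) := by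
  have hab : 0 < α / β := div_pos hα hβ
  set f : ℝ → ℝ → ℝ :=
    fun s u => u ^ γ * Real.exp (-(c₁ * u ^ β) - c₃ * (s * u) ^ κ) with hf
  -- Step 1: dominated convergence for the rescaled integrals
  have hlim : Tendsto (fun t : ℝ => ∫ u in Ioi (0:ℝ), f (t ^ (-(α/β))) u) atTop
      (nhds (∫ u in Ioi (0:ℝ), u ^ γ * Real.exp (-(c₁ * u ^ β)))) := by
    refine tendsto_integral_filter_of_dominated_convergence
      (fun u : ℝ => u ^ γ * Real.exp (-(c₁ * u ^ β))) ?_ ?_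
      (aux_integrable hβ hc₁ hγ) ?_
    · filter_upwards with t
      refine Measurable.aestronglyMeasurable ?_
      fun_prop
    · filter_upwards [eventually_ge_atTop (1:ℝ)] with t ht
      filter_upwards [ae_restrict_mem measurableSet_Ioi] with u hu
      have hu0 : (0:ℝ) < u := hu
      have hs : (0:ℝ) < t ^ (-(α/β)) := rpow_pos_of_pos (by linarith) _
      have hnn : 0 ≤ c₃ * (t ^ (-(α/β)) * u) ^ κ := by positivity
      rw [hf]
      rw [Real.norm_eq_abs, abs_mul, abs_of_nonneg (rpow_nonneg hu0.le _),
        abs_of_nonneg (Real.exp_pos _).le]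
      refine mul_le_mul_of_nonneg_left ?_ (rpow_nonneg hu0.le _)
      exact Real.exp_le_exp.mpr (by linarith)
    · filter_upwards [ae_restrict_mem measurableSet_Ioi] with u hu
      have hu0 : (0:ℝ) < u := hu
      have h1 : Tendsto (fun t : ℝ => t ^ (-(α/β)) * u) atTop (nhds 0) := by
        simpa using (tendsto_rpow_neg_atTop hab).mul_const u
      have h2 : Tendsto (fun t : ℝ => (t ^ (-(α/β)) * u) ^ κ) atTop (nhds 0) := by
        have := ((Real.continuousAt_rpow_const 0 κ (Or.inr hκ.le)).tendsto).comp h1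
        rw [Real.zero_rpow hκ.ne'] at this
        exact this
      have h3 : Tendsto (fun t : ℝ => -(c₁ * u ^ β) - c₃ * (t ^ (-(α/β)) * u) ^ κ)
          atTop (nhds (-(c₁ * u ^ β))) := by
        simpa using tendsto_const_nhds.sub (h2.const_mul c₃)
      simpa using (Real.continuous_exp.tendsto _).comp h3 |>.const_mul (u ^ γ)
  -- Step 2: the identity for t ≥ 1
  have hid : ∀ t : ℝ, 1 ≤ t →
      t ^ (α * (γ + 1) / β) *
        ∫ Q in Ioi (0 : ℝ), Q ^ γ * Real.exp (-(c₁ * t ^ α * Q ^ β) - c₃ * Q ^ κ)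
      = ∫ u in Ioi (0:ℝ), f (t ^ (-(α/β))) u := by
    intro t ht
    have ht0 : (0:ℝ) < t := by linarith
    set c : ℝ := t ^ (α / β) with hc_def
    have hc : 0 < c := rpow_pos_of_pos ht0 _
    have hcomp := integral_comp_mul_left_Ioi (fun u => f (t ^ (-(α/β))) u) 0 hc
    have heq : ∀ Q ∈ Ioi (0:ℝ), f (t ^ (-(α/β))) (c * Q)
        = c ^ γ * (Q ^ γ * Real.exp (-(c₁ * t ^ α * Q ^ β) - c₃ * Q ^ κ)) := by
      intro Q hQ
      have hQ0 : (0:ℝ) < Q := hQ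
      have h4 : t ^ (-(α/β)) * (c * Q) = Q := by
        rw [hc_def, ← mul_assoc, ← Real.rpow_add ht0]
        norm_num
      have h5 : (c * Q) ^ β = t ^ α * Q ^ β := by
        rw [mul_rpow hc.le hQ0.le, hc_def, ← Real.rpow_mul ht0.le,
          div_mul_cancel₀ _ hβ.ne']
      rw [hf]
      simp only []
      rw [h4, mul_rpow hc.le hQ0.le, h5]
      ring
    have h6 : (∫ Q in Ioi (0:ℝ), f (t ^ (-(α/β))) (c * Q))
        = c ^ γ * ∫ Q in Ioi (0:ℝ), Q ^ γ * Real.exp (-(c₁ * t ^ α * Q ^ β) - c₃ * Q ^ κ) := by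
      rw [← integral_const_mul]
      exact setIntegral_congr_fun measurableSet_Ioi heq
    rw [mul_zero] at hcomp
    rw [h6, smul_eq_mul] at hcomp
    have h7 : t ^ (α * (γ + 1) / β) = c * c ^ γ := by
      rw [hc_def, ← Real.rpow_mul ht0.le, ← Real.rpow_add ht0]
      congr 1
      field_simp
      ring
    have := congrArg (fun x => c * x) hcomp.symm
    rw [← mul_assoc, mul_inv_cancel₀ hc.ne', one_mul] at this
    rw [h7, mul_assoc, ← this]
  -- Step 3: combine
  have hval : (∫ u in Ioi (0:ℝ), u ^ γ * Real.exp (-(c₁ * u ^ β)))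
      = β⁻¹ * c₁ ^ (-((γ + 1) / β)) * Real.Gamma ((γ + 1) / β) := by
    simp_rw [show ∀ u : ℝ, -(c₁ * u ^ β) = -c₁ * u ^ β from fun u => by ring]
    rw [integral_rpow_mul_exp_neg_mul_rpow hβ hγ hc₁, neg_div]
    ring
  rw [hval] at hlim
  exact hlim.congr' (by filter_upwards [eventually_ge_atTop (1:ℝ)] with t ht using (hid t ht).symm)
end

section
/- Let α, β, κ, c₁, c₂, c₃ be positive real constants and let γ > −1. Define R₀(t) = c₂ · ∫₀^∞ Q^γ · exp(−c₁ · t^α · Q^{−β} − c₃ · Q^κ) dQ for t ≥ 1. Then there exist constants c₆, c₇ ∈ (0,∞), depending only on α, β, κ, γ, c₁, c₂, c₃, such that for all t ≥ 1: R₀(t) ≤ c₆ · exp(−c₇ · t^{ακ/(β+κ)}) (an exponential tail decay). -/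
open MeasureTheory Real Set

lemma aux_integrable_rpow_exp {κ b γ : ℝ} (hκ : 0 < κ) (hb : 0 < b) (hγ : -1 < γ) :
    IntegrableOn (fun Q : ℝ => Q ^ γ * Real.exp (-(b * Q ^ κ))) (Ioi 0) := by
  have hs : (-1 : ℝ) < (γ + 1) / κ - 1 := by
    have : 0 < (γ + 1) / κ := div_pos (by linarith) hκ
    linarith
  have hbase : IntegrableOn
      (fun y : ℝ => y ^ ((γ + 1) / κ - 1) * Real.exp (-b * y)) (Ioi 0) := by
    simpa using integrableOn_rpow_mul_exp_neg_mul_rpow hs (p := 1) one_pos hb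
  have h := (integrableOn_Ioi_comp_rpow_iff'
      (fun y : ℝ => y ^ ((γ + 1) / κ - 1) * Real.exp (-b * y)) hκ.ne').mpr hbase
  refine h.congr_fun (fun x hx => ?_) measurableSet_Ioi
  have hx0 : (0 : ℝ) < x := hx
  have h1 : (x ^ κ) ^ ((γ + 1) / κ - 1) = x ^ (γ + 1 - κ) := by
    rw [← Real.rpow_mul hx0.le]
    congr 1
    field_simp
  simp only [smul_eq_mul, h1, neg_mul]
  rw [← mul_assoc, ← Real.rpow_add hx0]
  ring_nf

/-- Estimate (27) of the paper (Example 4.2): an exponential tail decay.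
For `R₀(t) = c₂ ∫₀^∞ Q^γ exp(-c₁ t^α Q^{-β} - c₃ Q^κ) dQ` there are constants
`c₆, c₇ ∈ (0,∞)` with `R₀(t) ≤ c₆ exp(-c₇ t^{ακ/(β+κ)})` for all `t ≥ 1`. -/
theorem example42_exponential_tail_decay
    (α β κ c₁ c₂ c₃ γ : ℝ) (hα : 0 < α) (hβ : 0 < β) (hκ : 0 < κ)
    (hc₁ : 0 < c₁) (hc₂ : 0 < c₂) (hc₃ : 0 < c₃) (hγ : -1 < γ) :
    ∃ c₆ : ℝ, 0 < c₆ ∧ ∃ c₇ : ℝ, 0 < c₇ ∧ ∀ t : ℝ, 1 ≤ t →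
      c₂ * (∫ Q in Ioi (0 : ℝ), Q ^ γ * Real.exp (-(c₁ * t ^ α * Q ^ (-β)) - c₃ * Q ^ κ))
        ≤ c₆ * Real.exp (-(c₇ * t ^ (α * κ / (β + κ)))) := by
  set ε : ℝ := α * κ / (β + κ) with hε
  have hβκ : 0 < β + κ := by linarith
  set I : ℝ := ∫ Q in Ioi (0 : ℝ), Q ^ γ * Real.exp (-(c₃ / 2 * Q ^ κ)) with hI
  have hIint : IntegrableOn (fun Q : ℝ => Q ^ γ * Real.exp (-(c₃ / 2 * Q ^ κ))) (Ioi 0) :=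
    aux_integrable_rpow_exp hκ (by positivity) hγ
  have hInonneg : 0 ≤ I := by
    apply setIntegral_nonneg measurableSet_Ioi
    intro x hx
    exact mul_nonneg (Real.rpow_nonneg (le_of_lt hx) _) (Real.exp_nonneg _)
  have hmin : 0 < min c₁ c₃ := lt_min hc₁ hc₃
  refine ⟨c₂ * (I + 1), by positivity, min c₁ c₃ / 2, by linarith, fun t ht => ?_⟩
  have ht0 : (0 : ℝ) < t := lt_of_lt_of_le one_pos ht
  -- pointwise lower bound on the exponent
  have key : ∀ Q : ℝ, Q ∈ Ioi (0 : ℝ) →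
      min c₁ c₃ * t ^ ε ≤ c₁ * t ^ α * Q ^ (-β) + c₃ * Q ^ κ := by
    intro Q hQ
    have hQ0 : (0 : ℝ) < Q := hQ
    set M : ℝ := t ^ (α / (β + κ)) with hM
    have hM0 : (0 : ℝ) < M := rpow_pos_of_pos ht0 _
    have hne : β + κ ≠ 0 := hβκ.ne'
    have hMκ : M ^ κ = t ^ ε := by
      rw [hM, ← Real.rpow_mul ht0.le, hε]
      congr 1
      ring
    rcases le_or_gt Q M with hQM | hQM
    · have h1 : M ^ (-β) ≤ Q ^ (-β) := by
        apply Real.rpow_le_rpow_of_nonpos hQ0 hQM (by linarith)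
      have h2 : t ^ α * M ^ (-β) = t ^ ε := by
        rw [hM, ← Real.rpow_mul ht0.le, ← Real.rpow_add ht0, hε]
        congr 1
        field_simp
        ring
      have h3 : c₁ * t ^ ε ≤ c₁ * t ^ α * Q ^ (-β) := by
        rw [← h2, mul_assoc]
        have := mul_le_mul_of_nonneg_left h1 (le_of_lt (mul_pos hc₁ (rpow_pos_of_pos ht0 α)))
        calc c₁ * (t ^ α * M ^ (-β)) = c₁ * t ^ α * M ^ (-β) := by ring
          _ ≤ c₁ * t ^ α * Q ^ (-β) := by
              apply mul_le_mul_of_nonneg_left h1 (by positivity)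
          _ = c₁ * (t ^ α * Q ^ (-β)) := by ring
      have h4 : 0 ≤ c₃ * Q ^ κ := by positivity
      have h5 : min c₁ c₃ * t ^ ε ≤ c₁ * t ^ ε :=
        mul_le_mul_of_nonneg_right (min_le_left _ _) (by positivity)
      nlinarith [rpow_pos_of_pos hQ0 (-β), rpow_pos_of_pos ht0 α]
    · have h1 : M ^ κ ≤ Q ^ κ := Real.rpow_le_rpow hM0.le hQM.le hκ.le
      have h3 : c₃ * t ^ ε ≤ c₃ * Q ^ κ := by
        rw [← hMκ]
        exact mul_le_mul_of_nonneg_left h1 hc₃.le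
      have h4 : 0 ≤ c₁ * t ^ α * Q ^ (-β) := by positivity
      have h5 : min c₁ c₃ * t ^ ε ≤ c₃ * t ^ ε :=
        mul_le_mul_of_nonneg_right (min_le_right _ _) (by positivity)
      linarith
  -- pointwise bound on the integrand
  have hptwise : ∀ Q : ℝ, Q ∈ Ioi (0 : ℝ) →
      Q ^ γ * Real.exp (-(c₁ * t ^ α * Q ^ (-β)) - c₃ * Q ^ κ)
        ≤ Real.exp (-(min c₁ c₃ / 2 * t ^ ε)) * (Q ^ γ * Real.exp (-(c₃ / 2 * Q ^ κ))) := by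
    intro Q hQ
    have hQ0 : (0 : ℝ) < Q := hQ
    have hk := key Q hQ
    have h4 : 0 ≤ c₁ * t ^ α * Q ^ (-β) := by positivity
    have hexp : Real.exp (-(c₁ * t ^ α * Q ^ (-β)) - c₃ * Q ^ κ)
        ≤ Real.exp (-(min c₁ c₃ / 2 * t ^ ε)) * Real.exp (-(c₃ / 2 * Q ^ κ)) := by
      rw [← Real.exp_add]
      apply Real.exp_le_exp.mpr
      nlinarith [rpow_pos_of_pos hQ0 κ]
    calc Q ^ γ * Real.exp (-(c₁ * t ^ α * Q ^ (-β)) - c₃ * Q ^ κ)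
        ≤ Q ^ γ * (Real.exp (-(min c₁ c₃ / 2 * t ^ ε)) * Real.exp (-(c₃ / 2 * Q ^ κ))) :=
          mul_le_mul_of_nonneg_left hexp (by positivity)
      _ = Real.exp (-(min c₁ c₃ / 2 * t ^ ε)) * (Q ^ γ * Real.exp (-(c₃ / 2 * Q ^ κ))) := by ring
  -- integrability of the left integrand
  have hmeas : AEStronglyMeasurable
      (fun Q : ℝ => Q ^ γ * Real.exp (-(c₁ * t ^ α * Q ^ (-β)) - c₃ * Q ^ κ))
      (volume.restrict (Ioi 0)) := by
    apply Measurable.aestronglyMeasurable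
    fun_prop
  have hgint : IntegrableOn
      (fun Q : ℝ => Real.exp (-(min c₁ c₃ / 2 * t ^ ε)) *
        (Q ^ γ * Real.exp (-(c₃ / 2 * Q ^ κ)))) (Ioi 0) :=
    hIint.const_mul _
  have hfint : IntegrableOn
      (fun Q : ℝ => Q ^ γ * Real.exp (-(c₁ * t ^ α * Q ^ (-β)) - c₃ * Q ^ κ)) (Ioi 0) := by
    apply hgint.mono' hmeas
    filter_upwards [ae_restrict_mem measurableSet_Ioi] with Q hQ
    have hQ0 : (0 : ℝ) < Q := hQ
    rw [Real.norm_eq_abs, abs_of_nonneg (by positivity)]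
    exact hptwise Q hQ
  have hmono : (∫ Q in Ioi (0 : ℝ), Q ^ γ * Real.exp (-(c₁ * t ^ α * Q ^ (-β)) - c₃ * Q ^ κ))
      ≤ ∫ Q in Ioi (0 : ℝ), Real.exp (-(min c₁ c₃ / 2 * t ^ ε)) *
          (Q ^ γ * Real.exp (-(c₃ / 2 * Q ^ κ))) :=
    setIntegral_mono_on hfint hgint measurableSet_Ioi hptwise
  have hrhs : (∫ Q in Ioi (0 : ℝ), Real.exp (-(min c₁ c₃ / 2 * t ^ ε)) *
      (Q ^ γ * Real.exp (-(c₃ / 2 * Q ^ κ)))) = Real.exp (-(min c₁ c₃ / 2 * t ^ ε)) * I := by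
    rw [hI, ← integral_const_mul]
  have hfinal : c₂ * (∫ Q in Ioi (0 : ℝ),
      Q ^ γ * Real.exp (-(c₁ * t ^ α * Q ^ (-β)) - c₃ * Q ^ κ))
      ≤ c₂ * (Real.exp (-(min c₁ c₃ / 2 * t ^ ε)) * I) := by
    apply mul_le_mul_of_nonneg_left _ hc₂.le
    rw [← hrhs]
    exact hmono
  refine hfinal.trans ?_
  have : Real.exp (-(min c₁ c₃ / 2 * t ^ ε)) * I
      ≤ (I + 1) * Real.exp (-(min c₁ c₃ / 2 * t ^ ε)) := by
    nlinarith [Real.exp_pos (-(min c₁ c₃ / 2 * t ^ ε))]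
  nlinarith [Real.exp_pos (-(min c₁ c₃ / 2 * t ^ ε))]
end

section
/- Let α, β, κ, c₁, c₂, c₃ be positive real constants and let γ > −1. Define R₀(t) = c₂ · ∫₀^∞ Q^γ · exp(−c₁ · t^α · Q^{−β} − c₃ · Q^κ) dQ. Then the exponential estimate of Example 4.2 is logarithmically exact: lim_{t→∞} (−log R₀(t)) / t^{ακ/(β+κ)} = ((β+κ)/(βκ)) · (c₁^κ · c₃^β · β^κ · κ^β)^{1/(β+κ)}; equivalently, the limit equals c₁₀ · (A^{−1} + B^{−1}), where A = β/(γ+1), B = κ/(γ+1) and c₁₀ = (γ+1)^{−1} · (c₁^κ c₃^β β^κ κ^β)^{1/(β+κ)}. -/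
open MeasureTheory Real Filter Set

lemma ex42_int_aux {s p b : ℝ} (hs : -1 < s) (hp : 0 < p) (hb : 0 < b) :
    IntegrableOn (fun x : ℝ => x ^ s * Real.exp (-(b * x ^ p))) (Ioi 0) := by
  have hp' : (p : ℝ)⁻¹ ≠ 0 := by positivity
  rw [← integrableOn_Ioi_comp_rpow_iff' _ hp']
  have base : IntegrableOn (fun x : ℝ => x ^ (p⁻¹ * (s + 1) - 1) * Real.exp (-b * x ^ (1:ℝ)))
      (Ioi 0) := by
    refine integrableOn_rpow_mul_exp_neg_mul_rpow ?_ one_pos hb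
    have hs1 : (0:ℝ) < s + 1 := by linarith
    have : 0 < p⁻¹ * (s + 1) := mul_pos (by positivity) hs1
    linarith
  refine base.congr_fun (fun x hx => ?_) measurableSet_Ioi
  have hx0 : (0:ℝ) < x := hx
  rw [smul_eq_mul, ← Real.rpow_mul hx0.le, ← Real.rpow_mul hx0.le, inv_mul_cancel₀ hp.ne',
    Real.rpow_one, ← mul_assoc, ← Real.rpow_add hx0,
    show p⁻¹ * (s + 1) - 1 = p⁻¹ - 1 + p⁻¹ * s by ring]
  simp only [Real.rpow_one, neg_mul]

lemma ex42_cont_aux {γ β κ A B : ℝ} :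
    ContinuousOn (fun Q : ℝ => Q ^ γ * Real.exp (-(A * Q ^ (-β)) - B * Q ^ κ)) (Ioi 0) := by
  have h : ∀ r : ℝ, ContinuousOn (fun Q : ℝ => Q ^ r) (Ioi 0) := fun r x hx =>
    (Real.continuousAt_rpow_const x r (Or.inl (ne_of_gt hx))).continuousWithinAt
  exact (h γ).mul (Real.continuous_exp.comp_continuousOn
    (((continuousOn_const.mul (h (-β))).neg).sub (continuousOn_const.mul (h κ))))

lemma ex42_pos_aux {f : ℝ → ℝ} (hi : IntegrableOn f (Ioi 0))
    (hpos : ∀ x ∈ Ioi (0:ℝ), 0 < f x) : 0 < ∫ x in Ioi (0:ℝ), f x := by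
  rw [setIntegral_pos_iff_support_of_nonneg_ae
    ((ae_restrict_iff' measurableSet_Ioi).2 (ae_of_all _ fun x hx => (hpos x hx).le)) hi]
  refine lt_of_lt_of_le ?_ (measure_mono (fun x hx => ⟨(hpos x hx).ne', hx⟩ :
    Ioi (0:ℝ) ⊆ Function.support f ∩ Ioi 0))
  simp

lemma ex42_log_eq {x y : ℝ} (hx : 0 < x) (hy : 0 < y) (h : Real.log x = Real.log y) : x = y := by
  rw [← Real.exp_log hx, ← Real.exp_log hy, h]
lemma ex42_amgm {α β κ c₁ c₃ : ℝ} (hα : 0 < α) (hβ : 0 < β) (hκ : 0 < κ)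
    (hc₁ : 0 < c₁) (hc₃ : 0 < c₃) {t Q : ℝ} (ht : 0 < t) (hQ : 0 < Q) :
    ((β + κ) / (β * κ)) * (c₁ ^ κ * c₃ ^ β * β ^ κ * κ ^ β) ^ ((1 : ℝ) / (β + κ))
      * t ^ (α * κ / (β + κ)) ≤ c₁ * t ^ α * Q ^ (-β) + c₃ * Q ^ κ := by
  have hβκ : 0 < β + κ := by linarith
  have htα : 0 < t ^ α := rpow_pos_of_pos ht α
  have hQβ : 0 < Q ^ (-β) := rpow_pos_of_pos hQ _
  have hQκ : 0 < Q ^ κ := rpow_pos_of_pos hQ _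
  have hw : κ / (β + κ) + β / (β + κ) = 1 := by field_simp; ring
  have hp₁ : (0:ℝ) < c₁ * t ^ α * Q ^ (-β) / (κ / (β + κ)) := by positivity
  have hp₂ : (0:ℝ) < c₃ * Q ^ κ / (β / (β + κ)) := by positivity
  have hgm := Real.geom_mean_le_arith_mean2_weighted
    (by positivity : (0:ℝ) ≤ κ / (β + κ)) (by positivity : (0:ℝ) ≤ β / (β + κ))
    hp₁.le hp₂.le hw
  have harith : κ / (β + κ) * (c₁ * t ^ α * Q ^ (-β) / (κ / (β + κ)))
      + β / (β + κ) * (c₃ * Q ^ κ / (β / (β + κ))) = c₁ * t ^ α * Q ^ (-β) + c₃ * Q ^ κ := by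
    field_simp
  rw [harith] at hgm
  refine le_trans (le_of_eq ?_) hgm
  have hE : (0:ℝ) < c₁ ^ κ * c₃ ^ β * β ^ κ * κ ^ β := by positivity
  apply ex42_log_eq (by positivity) (by positivity)
  have e1 : Real.log (c₁ * t ^ α * Q ^ (-β) / (κ / (β + κ)))
      = Real.log c₁ + α * Real.log t + (-β) * Real.log Q - (Real.log κ - Real.log (β + κ)) := by
    rw [Real.log_div (by positivity) (by positivity), Real.log_mul (by positivity) hQβ.ne',
      Real.log_mul hc₁.ne' htα.ne', Real.log_rpow ht, Real.log_rpow hQ,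
      Real.log_div hκ.ne' hβκ.ne']
  have e2 : Real.log (c₃ * Q ^ κ / (β / (β + κ)))
      = Real.log c₃ + κ * Real.log Q - (Real.log β - Real.log (β + κ)) := by
    rw [Real.log_div (by positivity) (by positivity), Real.log_mul hc₃.ne' hQκ.ne',
      Real.log_rpow hQ, Real.log_div hβ.ne' hβκ.ne']
  have e3 : Real.log ((β + κ) / (β * κ) * (c₁ ^ κ * c₃ ^ β * β ^ κ * κ ^ β) ^ ((1 : ℝ) / (β + κ))
        * t ^ (α * κ / (β + κ)))
      = (Real.log (β + κ) - (Real.log β + Real.log κ))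
        + (1 / (β + κ)) * (κ * Real.log c₁ + β * Real.log c₃ + κ * Real.log β + β * Real.log κ)
        + (α * κ / (β + κ)) * Real.log t := by
    rw [Real.log_mul (by positivity) (by positivity), Real.log_mul (by positivity) (by positivity),
      Real.log_rpow ht, Real.log_rpow hE, Real.log_div (by positivity) (by positivity),
      Real.log_mul hβ.ne' hκ.ne', Real.log_mul (by positivity) (by positivity),
      Real.log_mul (by positivity) (by positivity), Real.log_mul (by positivity) (by positivity),
      Real.log_rpow hc₁, Real.log_rpow hc₃, Real.log_rpow hβ, Real.log_rpow hκ]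
  rw [e3, Real.log_mul (by positivity) (by positivity), Real.log_rpow hp₁, Real.log_rpow hp₂,
    e1, e2]
  field_simp
  ring
lemma ex42_qstar {α β κ c₁ c₃ : ℝ} (hβ : 0 < β) (hκ : 0 < κ)
    (hc₁ : 0 < c₁) (hc₃ : 0 < c₃) {t : ℝ} (ht : 0 < t) :
    c₁ * t ^ α * ((β * c₁ * t ^ α / (κ * c₃)) ^ ((1 : ℝ) / (β + κ))) ^ (-β)
      + c₃ * ((β * c₁ * t ^ α / (κ * c₃)) ^ ((1 : ℝ) / (β + κ))) ^ κ
    = ((β + κ) / (β * κ)) * (c₁ ^ κ * c₃ ^ β * β ^ κ * κ ^ β) ^ ((1 : ℝ) / (β + κ))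
      * t ^ (α * κ / (β + κ)) := by
  have hβκ : 0 < β + κ := by linarith
  have htα : 0 < t ^ α := rpow_pos_of_pos ht α
  have hX : (0:ℝ) < β * c₁ * t ^ α / (κ * c₃) := by positivity
  have hQs : (0:ℝ) < (β * c₁ * t ^ α / (κ * c₃)) ^ ((1 : ℝ) / (β + κ)) :=
    rpow_pos_of_pos hX _
  have hE : (0:ℝ) < c₁ ^ κ * c₃ ^ β * β ^ κ * κ ^ β := by positivity
  have eQ : Real.log ((β * c₁ * t ^ α / (κ * c₃)) ^ ((1 : ℝ) / (β + κ)))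
      = (1 / (β + κ)) * (Real.log β + Real.log c₁ + α * Real.log t
        - (Real.log κ + Real.log c₃)) := by
    rw [Real.log_rpow hX, Real.log_div (by positivity) (by positivity),
      Real.log_mul (by positivity) htα.ne', Real.log_mul hβ.ne' hc₁.ne',
      Real.log_rpow ht, Real.log_mul hκ.ne' hc₃.ne']
  have eC : Real.log ((β + κ) / (β * κ) * (c₁ ^ κ * c₃ ^ β * β ^ κ * κ ^ β) ^ ((1 : ℝ) / (β + κ))
        * t ^ (α * κ / (β + κ)))
      = (Real.log (β + κ) - (Real.log β + Real.log κ))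
        + (1 / (β + κ)) * (κ * Real.log c₁ + β * Real.log c₃ + κ * Real.log β + β * Real.log κ)
        + (α * κ / (β + κ)) * Real.log t := by
    rw [Real.log_mul (by positivity) (by positivity), Real.log_mul (by positivity) (by positivity),
      Real.log_rpow ht, Real.log_rpow hE, Real.log_div (by positivity) (by positivity),
      Real.log_mul hβ.ne' hκ.ne', Real.log_mul (by positivity) (by positivity),
      Real.log_mul (by positivity) (by positivity), Real.log_mul (by positivity) (by positivity),
      Real.log_rpow hc₁, Real.log_rpow hc₃, Real.log_rpow hβ, Real.log_rpow hκ]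
  have cA : c₁ * t ^ α * ((β * c₁ * t ^ α / (κ * c₃)) ^ ((1 : ℝ) / (β + κ))) ^ (-β)
      = (κ / (β + κ)) * ((β + κ) / (β * κ) * (c₁ ^ κ * c₃ ^ β * β ^ κ * κ ^ β)
        ^ ((1 : ℝ) / (β + κ)) * t ^ (α * κ / (β + κ))) := by
    apply ex42_log_eq (by positivity) (by positivity)
    rw [Real.log_mul (by positivity) (by positivity), Real.log_mul hc₁.ne' htα.ne',
      Real.log_rpow ht, Real.log_rpow hQs, eQ,
      Real.log_mul (by positivity) (by positivity), eC, Real.log_div hκ.ne' hβκ.ne']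
    field_simp
    ring
  have cB : c₃ * ((β * c₁ * t ^ α / (κ * c₃)) ^ ((1 : ℝ) / (β + κ))) ^ κ
      = (β / (β + κ)) * ((β + κ) / (β * κ) * (c₁ ^ κ * c₃ ^ β * β ^ κ * κ ^ β)
        ^ ((1 : ℝ) / (β + κ)) * t ^ (α * κ / (β + κ))) := by
    apply ex42_log_eq (by positivity) (by positivity)
    rw [Real.log_mul hc₃.ne' (by positivity), Real.log_rpow hQs, eQ,
      Real.log_mul (by positivity) (by positivity), eC, Real.log_div hβ.ne' hβκ.ne']
    field_simp
    ring
  rw [cA, cB, ← add_mul]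
  rw [show κ / (β + κ) + β / (β + κ) = 1 by field_simp; ring, one_mul]

set_option maxHeartbeats 2000000 in
/-- Logarithmic exactness of the exponential estimate of Example 4.2:
`lim_{t→∞} (-log R₀(t)) / t^{ακ/(β+κ)} = ((β+κ)/(βκ)) (c₁^κ c₃^β β^κ κ^β)^{1/(β+κ)}`,
where `R₀(t) = c₂ ∫₀^∞ Q^γ exp(-c₁ t^α Q^{-β} - c₃ Q^κ) dQ`. -/
theorem example42_log_exact
    (α β κ c₁ c₂ c₃ γ : ℝ) (hα : 0 < α) (hβ : 0 < β) (hκ : 0 < κ)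
    (hc₁ : 0 < c₁) (hc₂ : 0 < c₂) (hc₃ : 0 < c₃) (hγ : -1 < γ) :
    Tendsto
      (fun t : ℝ =>
        (-Real.log (c₂ *
          ∫ Q in Ioi (0 : ℝ), Q ^ γ * Real.exp (-(c₁ * t ^ α * Q ^ (-β)) - c₃ * Q ^ κ)))
          / t ^ (α * κ / (β + κ)))
      atTop
      (nhds (((β + κ) / (β * κ)) *
        (c₁ ^ κ * c₃ ^ β * β ^ κ * κ ^ β) ^ ((1 : ℝ) / (β + κ)))) := by
  have hβκ : 0 < β + κ := by linarith
  set ρ := α * κ / (β + κ) with hρdef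
  have hρ : 0 < ρ := by rw [hρdef]; positivity
  set L := ((β + κ) / (β * κ)) * (c₁ ^ κ * c₃ ^ β * β ^ κ * κ ^ β) ^ ((1 : ℝ) / (β + κ))
    with hLdef
  have hL : 0 < L := by rw [hLdef]; positivity
  rw [tendsto_order]
  constructor
  · -- lower bound part
    intro a ha
    have hmaxL : max a (L / 2) < L := max_lt ha (half_lt_self hL)
    set m := (max a (L / 2) + L) / 2 with hm
    have hma : a < m := by
      have := le_max_left a (L / 2); rw [hm]; linarith
    have hmL : m < L := by rw [hm]; linarith
    have hm0 : 0 < m := by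
      have := le_max_right a (L / 2); rw [hm]; linarith
    set θ := m / L with hθdef
    have hθ0 : 0 < θ := div_pos hm0 hL
    have hθ1 : θ < 1 := (div_lt_one hL).2 hmL
    have hθL : θ * L = m := div_mul_cancel₀ m hL.ne'
    have hb : 0 < (1 - θ) * c₃ := mul_pos (by linarith) hc₃
    set J := ∫ Q in Ioi (0:ℝ), Q ^ γ * Real.exp (-((1 - θ) * c₃ * Q ^ κ)) with hJ
    have hJint : IntegrableOn (fun Q : ℝ => Q ^ γ * Real.exp (-((1 - θ) * c₃ * Q ^ κ)))
        (Ioi 0) := ex42_int_aux hγ hκ hb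
    have hJpos : 0 < J := ex42_pos_aux hJint (fun x hx => by
      have : (0:ℝ) < x := hx; positivity)
    have hev : ∀ᶠ t in atTop, m - Real.log (c₂ * J) / t ^ ρ ≤
        (-Real.log (c₂ * ∫ Q in Ioi (0:ℝ),
          Q ^ γ * Real.exp (-(c₁ * t ^ α * Q ^ (-β)) - c₃ * Q ^ κ))) / t ^ ρ := by
      filter_upwards [eventually_ge_atTop (1:ℝ)] with t ht1
      have ht0 : (0:ℝ) < t := lt_of_lt_of_le one_pos ht1
      have htρ : 0 < t ^ ρ := rpow_pos_of_pos ht0 _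
      have htα : 0 < t ^ α := rpow_pos_of_pos ht0 _
      have hgint : IntegrableOn
          (fun Q : ℝ => Q ^ γ * Real.exp (-(c₁ * t ^ α * Q ^ (-β)) - c₃ * Q ^ κ)) (Ioi 0) := by
        apply Integrable.mono' (ex42_int_aux hγ hκ hc₃)
          (ex42_cont_aux.aestronglyMeasurable measurableSet_Ioi)
        rw [ae_restrict_iff' measurableSet_Ioi]
        refine ae_of_all _ fun Q hQ => ?_
        have hQ0 : (0:ℝ) < Q := hQ
        have h1 : (0:ℝ) < c₁ * t ^ α * Q ^ (-β) := by positivity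
        rw [Real.norm_eq_abs, abs_of_nonneg (by positivity)]
        have : -(c₁ * t ^ α * Q ^ (-β)) - c₃ * Q ^ κ ≤ -(c₃ * Q ^ κ) := by linarith
        exact mul_le_mul_of_nonneg_left (Real.exp_le_exp.2 this) (Real.rpow_nonneg hQ0.le γ)
      have hgpos : 0 < ∫ Q in Ioi (0:ℝ),
          Q ^ γ * Real.exp (-(c₁ * t ^ α * Q ^ (-β)) - c₃ * Q ^ κ) :=
        ex42_pos_aux hgint (fun x hx => by
          have : (0:ℝ) < x := hx; positivity)
      have hmono : (∫ Q in Ioi (0:ℝ),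
            Q ^ γ * Real.exp (-(c₁ * t ^ α * Q ^ (-β)) - c₃ * Q ^ κ)) ≤
          ∫ Q in Ioi (0:ℝ),
            Real.exp (-(m * t ^ ρ)) * (Q ^ γ * Real.exp (-((1 - θ) * c₃ * Q ^ κ))) := by
        apply setIntegral_mono_on hgint (hJint.const_mul _) measurableSet_Ioi
        intro Q hQ
        have hQ0 : (0:ℝ) < Q := hQ
        have hAM := ex42_amgm hα hβ hκ hc₁ hc₃ ht0 hQ0
        rw [← hLdef, ← hρdef] at hAM
        have h1 : m * t ^ ρ ≤ θ * (c₁ * t ^ α * Q ^ (-β) + c₃ * Q ^ κ) := by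
          calc m * t ^ ρ = θ * (L * t ^ ρ) := by rw [← hθL]; ring
          _ ≤ _ := mul_le_mul_of_nonneg_left hAM hθ0.le
        have h4 : 0 ≤ (1 - θ) * (c₁ * t ^ α * Q ^ (-β)) :=
          mul_nonneg (by linarith) (by positivity)
        have hexp : -(c₁ * t ^ α * Q ^ (-β)) - c₃ * Q ^ κ ≤
            -(m * t ^ ρ) + -((1 - θ) * c₃ * Q ^ κ) := by nlinarith
        rw [show Real.exp (-(m * t ^ ρ)) * (Q ^ γ * Real.exp (-((1 - θ) * c₃ * Q ^ κ)))
          = Q ^ γ * (Real.exp (-(m * t ^ ρ)) * Real.exp (-((1 - θ) * c₃ * Q ^ κ))) by ring,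
          ← Real.exp_add]
        exact mul_le_mul_of_nonneg_left (Real.exp_le_exp.2 hexp) (Real.rpow_nonneg hQ0.le γ)
      rw [integral_const_mul, ← hJ] at hmono
      have hlog : Real.log (c₂ * ∫ Q in Ioi (0:ℝ),
            Q ^ γ * Real.exp (-(c₁ * t ^ α * Q ^ (-β)) - c₃ * Q ^ κ)) ≤
          Real.log c₂ + (-(m * t ^ ρ) + Real.log J) := by
        calc Real.log (c₂ * ∫ Q in Ioi (0:ℝ),
              Q ^ γ * Real.exp (-(c₁ * t ^ α * Q ^ (-β)) - c₃ * Q ^ κ))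
            ≤ Real.log (c₂ * (Real.exp (-(m * t ^ ρ)) * J)) :=
              Real.log_le_log (by positivity) (mul_le_mul_of_nonneg_left hmono hc₂.le)
          _ = Real.log c₂ + (-(m * t ^ ρ) + Real.log J) := by
              rw [Real.log_mul hc₂.ne' (by positivity),
                Real.log_mul (Real.exp_ne_zero _) hJpos.ne', Real.log_exp]
      rw [show m - Real.log (c₂ * J) / t ^ ρ = (m * t ^ ρ - Real.log (c₂ * J)) / t ^ ρ by
        field_simp]
      rw [div_le_div_iff_of_pos_right htρ]
      rw [Real.log_mul hc₂.ne' hJpos.ne']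
      linarith
    have hten : Tendsto (fun t : ℝ => m - Real.log (c₂ * J) / t ^ ρ) atTop (nhds m) := by
      have h0 : Tendsto (fun t : ℝ => Real.log (c₂ * J) / t ^ ρ) atTop (nhds 0) :=
        tendsto_const_nhds.div_atTop (tendsto_rpow_atTop hρ)
      simpa using tendsto_const_nhds.sub h0
    filter_upwards [hev, hten.eventually (eventually_gt_nhds hma)] with t h1 h2
    exact lt_of_lt_of_le h2 h1
  · -- upper bound part
    intro a ha
    set M := (L + a) / 2 with hM
    have hLM : L < M := by rw [hM]; linarith
    have hMa : M < a := by rw [hM]; linarith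
    have hM0 : 0 < M := by linarith
    have hML : 1 < M / L := (one_lt_div hL).2 hLM
    have hML0 : 0 < M / L := by linarith
    set u := (M / L) ^ κ⁻¹ with hu
    have hu1 : 1 < u := by
      rw [hu]
      exact (Real.one_lt_rpow_iff_of_pos hML0).2 (Or.inl ⟨hML, by positivity⟩)
    have hu0 : 0 < u := by linarith
    have huκ : u ^ κ = M / L := by
      rw [hu, ← Real.rpow_mul hML0.le, inv_mul_cancel₀ hκ.ne', Real.rpow_one]
    set cu := min 1 (u ^ γ) with hcu
    have hcu0 : 0 < cu := lt_min one_pos (rpow_pos_of_pos hu0 γ)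
    set D0 := (1 / (β + κ)) * (Real.log β + Real.log c₁ - (Real.log κ + Real.log c₃)) with hD0
    set D1 := α / (β + κ) with hD1
    set C₀ := -Real.log (c₂ * cu * (u - 1)) - (γ + 1) * D0 with hC₀
    set C₁ := -((γ + 1) * D1) with hC₁
    have hev : ∀ᶠ t in atTop,
        (-Real.log (c₂ * ∫ Q in Ioi (0:ℝ),
          Q ^ γ * Real.exp (-(c₁ * t ^ α * Q ^ (-β)) - c₃ * Q ^ κ))) / t ^ ρ ≤
        M + (C₀ + C₁ * Real.log t) / t ^ ρ := by
      filter_upwards [eventually_ge_atTop (1:ℝ)] with t ht1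
      have ht0 : (0:ℝ) < t := lt_of_lt_of_le one_pos ht1
      have htρ : 0 < t ^ ρ := rpow_pos_of_pos ht0 _
      have htα : 0 < t ^ α := rpow_pos_of_pos ht0 _
      have hX : (0:ℝ) < β * c₁ * t ^ α / (κ * c₃) := by positivity
      set Qs := (β * c₁ * t ^ α / (κ * c₃)) ^ ((1 : ℝ) / (β + κ)) with hQsdef
      have hQs0 : 0 < Qs := rpow_pos_of_pos hX _
      have hqeval : c₁ * t ^ α * Qs ^ (-β) + c₃ * Qs ^ κ = L * t ^ ρ := by
        rw [hQsdef, hρdef, hLdef]; exact ex42_qstar hβ hκ hc₁ hc₃ ht0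
      have hgint : IntegrableOn
          (fun Q : ℝ => Q ^ γ * Real.exp (-(c₁ * t ^ α * Q ^ (-β)) - c₃ * Q ^ κ)) (Ioi 0) := by
        apply Integrable.mono' (ex42_int_aux hγ hκ hc₃)
          (ex42_cont_aux.aestronglyMeasurable measurableSet_Ioi)
        rw [ae_restrict_iff' measurableSet_Ioi]
        refine ae_of_all _ fun Q hQ => ?_
        have hQ0 : (0:ℝ) < Q := hQ
        have h1 : (0:ℝ) < c₁ * t ^ α * Q ^ (-β) := by positivity
        rw [Real.norm_eq_abs, abs_of_nonneg (by positivity)]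
        have : -(c₁ * t ^ α * Q ^ (-β)) - c₃ * Q ^ κ ≤ -(c₃ * Q ^ κ) := by linarith
        exact mul_le_mul_of_nonneg_left (Real.exp_le_exp.2 this) (Real.rpow_nonneg hQ0.le γ)
      have hsub : Ioc Qs (u * Qs) ⊆ Ioi (0:ℝ) := fun x hx => lt_trans hQs0 hx.1
      have hQsγ : (0:ℝ) < Qs ^ γ := rpow_pos_of_pos hQs0 γ
      have hconst : ∀ Q ∈ Ioc Qs (u * Qs),
          cu * Qs ^ γ * Real.exp (-(M * t ^ ρ)) ≤
            Q ^ γ * Real.exp (-(c₁ * t ^ α * Q ^ (-β)) - c₃ * Q ^ κ) := by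
        intro Q hQ
        obtain ⟨hQ1, hQ2⟩ := hQ
        have hQ0 : (0:ℝ) < Q := lt_trans hQs0 hQ1
        have hγb : cu * Qs ^ γ ≤ Q ^ γ := by
          rcases le_or_gt 0 γ with h | h
          · have h5 : Qs ^ γ ≤ Q ^ γ := Real.rpow_le_rpow hQs0.le hQ1.le h
            have h6 : cu * Qs ^ γ ≤ 1 * Qs ^ γ :=
              mul_le_mul_of_nonneg_right (min_le_left _ _) hQsγ.le
            rw [one_mul] at h6; linarith
          · have h5 : (u * Qs) ^ γ ≤ Q ^ γ :=
              Real.rpow_le_rpow_of_nonpos hQ0 hQ2 h.le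
            rw [Real.mul_rpow hu0.le hQs0.le] at h5
            have h6 : cu * Qs ^ γ ≤ u ^ γ * Qs ^ γ :=
              mul_le_mul_of_nonneg_right (min_le_right _ _) hQsγ.le
            linarith
        have hexp : Real.exp (-(M * t ^ ρ)) ≤
            Real.exp (-(c₁ * t ^ α * Q ^ (-β)) - c₃ * Q ^ κ) := by
          apply Real.exp_le_exp.2
          have i1 : c₁ * t ^ α * Q ^ (-β) ≤ c₁ * t ^ α * Qs ^ (-β) :=
            mul_le_mul_of_nonneg_left
              (Real.rpow_le_rpow_of_nonpos hQs0 hQ1.le (neg_nonpos.2 hβ.le)) (by positivity)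
          have i2 : c₃ * Q ^ κ ≤ M / L * (c₃ * Qs ^ κ) := by
            have h7 : Q ^ κ ≤ (u * Qs) ^ κ := Real.rpow_le_rpow hQ0.le hQ2 hκ.le
            rw [Real.mul_rpow hu0.le hQs0.le, huκ] at h7
            calc c₃ * Q ^ κ ≤ c₃ * (M / L * Qs ^ κ) :=
                  mul_le_mul_of_nonneg_left h7 hc₃.le
              _ = M / L * (c₃ * Qs ^ κ) := by ring
          have i4 : c₁ * t ^ α * Qs ^ (-β) ≤ M / L * (c₁ * t ^ α * Qs ^ (-β)) :=
            le_mul_of_one_le_left (by positivity) hML.le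
          have i5 : M / L * (c₁ * t ^ α * Qs ^ (-β)) + M / L * (c₃ * Qs ^ κ) = M * t ^ ρ := by
            rw [← mul_add, hqeval]
            field_simp
          linarith
        exact mul_le_mul hγb hexp (Real.exp_pos _).le (Real.rpow_nonneg hQ0.le γ)
      have hlb : cu * Qs ^ γ * Real.exp (-(M * t ^ ρ)) * ((u - 1) * Qs) ≤
          ∫ Q in Ioi (0:ℝ), Q ^ γ * Real.exp (-(c₁ * t ^ α * Q ^ (-β)) - c₃ * Q ^ κ) := by
        have e1 := setIntegral_ge_of_const_le_real (μ := volume) measurableSet_Ioc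
          measure_Ioc_lt_top.ne hconst (hgint.mono_set hsub)
        rw [Real.volume_real_Ioc_of_le (by nlinarith : Qs ≤ u * Qs)] at e1
        have e2 : (∫ Q in Ioc Qs (u * Qs),
              Q ^ γ * Real.exp (-(c₁ * t ^ α * Q ^ (-β)) - c₃ * Q ^ κ)) ≤
            ∫ Q in Ioi (0:ℝ), Q ^ γ * Real.exp (-(c₁ * t ^ α * Q ^ (-β)) - c₃ * Q ^ κ) := by
          apply setIntegral_mono_set hgint
          · exact (ae_restrict_iff' measurableSet_Ioi).2 (ae_of_all _ fun Q hQ => by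
              have hQ0 : (0:ℝ) < Q := hQ
              positivity)
          · exact HasSubset.Subset.eventuallyLE hsub
        calc cu * Qs ^ γ * Real.exp (-(M * t ^ ρ)) * ((u - 1) * Qs)
            = cu * Qs ^ γ * Real.exp (-(M * t ^ ρ)) * (u * Qs - Qs) := by ring
          _ ≤ _ := le_trans e1 e2
      have hlbpos : 0 < cu * Qs ^ γ * Real.exp (-(M * t ^ ρ)) * ((u - 1) * Qs) := by
        have : (0:ℝ) < u - 1 := by linarith
        positivity
      have eQs : Real.log Qs = D0 + D1 * Real.log t := by
        rw [hQsdef, Real.log_rpow hX, Real.log_div (by positivity) (by positivity),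
          Real.log_mul (by positivity) htα.ne', Real.log_mul hβ.ne' hc₁.ne',
          Real.log_rpow ht0, Real.log_mul hκ.ne' hc₃.ne', hD0, hD1]
        field_simp
        ring
      have hgpos : 0 < ∫ Q in Ioi (0:ℝ),
          Q ^ γ * Real.exp (-(c₁ * t ^ α * Q ^ (-β)) - c₃ * Q ^ κ) :=
        ex42_pos_aux hgint (fun x hx => by
          have : (0:ℝ) < x := hx; positivity)
      have hlog : -Real.log (c₂ * ∫ Q in Ioi (0:ℝ),
            Q ^ γ * Real.exp (-(c₁ * t ^ α * Q ^ (-β)) - c₃ * Q ^ κ)) ≤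
          M * t ^ ρ + C₀ + C₁ * Real.log t := by
        have h8 : Real.log (c₂ * (cu * Qs ^ γ * Real.exp (-(M * t ^ ρ)) * ((u - 1) * Qs))) ≤
            Real.log (c₂ * ∫ Q in Ioi (0:ℝ),
              Q ^ γ * Real.exp (-(c₁ * t ^ α * Q ^ (-β)) - c₃ * Q ^ κ)) :=
          Real.log_le_log (by positivity) (mul_le_mul_of_nonneg_left hlb hc₂.le)
        have hu1' : u - 1 ≠ 0 := sub_ne_zero_of_ne hu1.ne'
        have h9 : Real.log (c₂ * (cu * Qs ^ γ * Real.exp (-(M * t ^ ρ)) * ((u - 1) * Qs)))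
            = Real.log c₂ + (Real.log cu + γ * Real.log Qs + (-(M * t ^ ρ))
              + (Real.log (u - 1) + Real.log Qs)) := by
          rw [Real.log_mul hc₂.ne' hlbpos.ne', Real.log_mul (by positivity) (by positivity),
            Real.log_mul (by positivity) (Real.exp_ne_zero _),
            Real.log_mul hcu0.ne' hQsγ.ne', Real.log_rpow hQs0, Real.log_exp,
            Real.log_mul hu1' hQs0.ne']
        rw [h9, eQs] at h8
        have h10 : Real.log (c₂ * cu * (u - 1)) =
            Real.log c₂ + Real.log cu + Real.log (u - 1) := by
          rw [Real.log_mul (by positivity) hu1', Real.log_mul hc₂.ne' hcu0.ne']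
        rw [hC₀, hC₁, h10]
        nlinarith [h8]
      have hrw : M + (C₀ + C₁ * Real.log t) / t ^ ρ
          = (M * t ^ ρ + (C₀ + C₁ * Real.log t)) / t ^ ρ := by field_simp
      rw [hrw]
      rw [div_le_div_iff_of_pos_right htρ]
      linarith
    have hten : Tendsto (fun t : ℝ => M + (C₀ + C₁ * Real.log t) / t ^ ρ) atTop (nhds M) := by
      have h1 : Tendsto (fun t : ℝ => C₀ / t ^ ρ) atTop (nhds 0) :=
        tendsto_const_nhds.div_atTop (tendsto_rpow_atTop hρ)
      have h2 : Tendsto (fun t : ℝ => Real.log t / t ^ ρ) atTop (nhds 0) :=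
        (isLittleO_log_rpow_atTop hρ).tendsto_div_nhds_zero
      have h3 : Tendsto (fun t : ℝ => (C₀ + C₁ * Real.log t) / t ^ ρ) atTop (nhds 0) := by
        have := h1.add ((h2.const_mul C₁))
        simp only [add_zero, mul_zero] at this
        refine this.congr fun t => ?_
        ring
      simpa using tendsto_const_nhds.add h3
    filter_upwards [hev, hten.eventually (eventually_lt_nhds hMa)] with t h1 h2
    exact lt_of_le_of_lt h1 h2
end
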